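/- Let n ≥ 2 be an integer and let V_n', V_n'', V_n''' denote the first, second and third derivatives of V_n. Define 𝒱_n(x) = 3·V_n''(x)·( (V_n'(x))² − 2(V_n(x) − V_n(0))·V_n''(x) ) + 2(V_n(x) − V_n(0))·V_n'(x)·V_n'''(x). Then as x → 0 (with x ≠ 0), the quotient 𝒱_n(x)/x⁴ converges to the limit ℓ_n = 96·( Π_{n,0}⁴·Σ_{n−1}(0)²·Σ_{k=1}^n (k−1/2)^{−4} + 4·(−1)^n·Π_{n,0}³·Σ_{n−1}(0)²·Σ_{n−2}(0) ), and ℓ_n > 0. -/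

import Mathlib

open Finset
open Polynomial

-- sum over 1-element subsets
lemma aux_pc_one (s : Finset ℕ) (f : ℕ → ℝ) :
    ∑ P ∈ s.powersetCard 1, ∏ j ∈ P, f j = ∑ k ∈ s, f k := by
  rw [Finset.powersetCard_one, Finset.sum_map]
  simp

-- sum over 2-element subsets
lemma aux_pc_two (s : Finset ℕ) (f : ℕ → ℝ) :
    2 * ∑ P ∈ s.powersetCard 2, ∏ j ∈ P, f j
      = (∑ k ∈ s, f k) ^ 2 - ∑ k ∈ s, f k ^ 2 := by
  induction s using Finset.cons_induction with
  | empty =>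
      rw [Finset.powersetCard_eq_empty.2 (by simp)]
      simp
  | cons a s ha ih =>
    have hdisj : Disjoint (s.powersetCard 2) ((s.powersetCard 1).image (insert a)) := by
      rw [Finset.disjoint_left]
      rintro P hP hP'
      rw [Finset.mem_image] at hP'
      obtain ⟨Q, hQ, rfl⟩ := hP'
      exact ha ((Finset.mem_powersetCard.1 hP).1 (Finset.mem_insert_self a Q))
    have hinj : ∀ Q ∈ s.powersetCard 1, ∀ R ∈ s.powersetCard 1,
        insert a Q = insert a R → Q = R := by
      intro Q hQ R hR h
      have haQ : a ∉ Q := fun h' => ha ((Finset.mem_powersetCard.1 hQ).1 h')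
      have haR : a ∉ R := fun h' => ha ((Finset.mem_powersetCard.1 hR).1 h')
      rw [← Finset.erase_insert haQ, h, Finset.erase_insert haR]
    rw [Finset.cons_eq_insert, show (2:ℕ) = Nat.succ 1 from rfl,
      Finset.powersetCard_succ_insert ha, Finset.sum_union hdisj, Finset.sum_image hinj,
      Finset.sum_insert ha, Finset.sum_insert ha]
    have himg : ∑ Q ∈ s.powersetCard 1, ∏ j ∈ insert a Q, f j
        = f a * ∑ k ∈ s, f k := by
      rw [← aux_pc_one s f, Finset.mul_sum]
      refine Finset.sum_congr rfl fun Q hQ => ?_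
      have haQ : a ∉ Q := fun h' => ha ((Finset.mem_powersetCard.1 hQ).1 h')
      rw [Finset.prod_insert haQ]
    rw [himg]
    have h2 : (2:ℕ).succ - 1 = 2 := rfl
    push_cast at ih ⊢
    nlinarith [ih]

-- complement bijection
lemma aux_compl (s : Finset ℕ) (i : ℕ) (hi : i ≤ s.card) (f : ℕ → ℝ) :
    ∑ P ∈ s.powersetCard (s.card - i), ∏ j ∈ P, f j
      = ∑ Q ∈ s.powersetCard i, ∏ j ∈ s \ Q, f j := by
  refine Finset.sum_nbij' (fun P => s \ P) (fun Q => s \ Q) ?_ ?_ ?_ ?_ ?_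
  · intro P hP
    rw [Finset.mem_powersetCard] at hP ⊢
    refine ⟨Finset.sdiff_subset, ?_⟩
    rw [Finset.card_sdiff_of_subset hP.1, hP.2]
    omega
  · intro Q hQ
    rw [Finset.mem_powersetCard] at hQ ⊢
    refine ⟨Finset.sdiff_subset, ?_⟩
    rw [Finset.card_sdiff_of_subset hQ.1, hQ.2]
  · intro P hP
    exact Finset.sdiff_sdiff_eq_self (Finset.mem_powersetCard.1 hP).1
  · intro Q hQ
    exact Finset.sdiff_sdiff_eq_self (Finset.mem_powersetCard.1 hQ).1
  · intro P hP
    rw [Finset.sdiff_sdiff_eq_self (Finset.mem_powersetCard.1 hP).1]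

lemma aux_evals (s : Finset ℕ) (b : ℕ → ℝ) (hb : ∀ k, b k ≠ 0) :
    ((∏ k ∈ s, (X - C (b k)) : ℝ[X]).eval 0 = ∏ k ∈ s, (-(b k))) ∧
    ((derivative (∏ k ∈ s, (X - C (b k)) : ℝ[X])).eval 0
      = -(∏ k ∈ s, (-(b k))) * ∑ k ∈ s, (b k)⁻¹) ∧
    ((derivative (derivative (∏ k ∈ s, (X - C (b k)) : ℝ[X]))).eval 0
      = (∏ k ∈ s, (-(b k))) * ((∑ k ∈ s, (b k)⁻¹)^2 - ∑ k ∈ s, ((b k)⁻¹)^2)) := by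
  induction s using Finset.cons_induction with
  | empty => simp
  | cons a s ha ih =>
    obtain ⟨h0, h1, h2⟩ := ih
    have hd1 : derivative (∏ k ∈ Finset.cons a s ha, (X - C (b k)) : ℝ[X])
        = (∏ k ∈ s, (X - C (b k))) + (X - C (b a)) * derivative (∏ k ∈ s, (X - C (b k))) := by
      rw [Finset.prod_cons, derivative_mul, derivative_X_sub_C, one_mul]
    have hd2 : derivative (derivative (∏ k ∈ Finset.cons a s ha, (X - C (b k)) : ℝ[X]))
        = 2 * derivative (∏ k ∈ s, (X - C (b k)))
          + (X - C (b a)) * derivative (derivative (∏ k ∈ s, (X - C (b k)))) := by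
      rw [hd1, derivative_add, derivative_mul, derivative_X_sub_C, one_mul]
      ring
    have hba := hb a
    refine ⟨?_, ?_, ?_⟩
    · rw [Finset.prod_cons, Finset.prod_cons, eval_mul, eval_sub, eval_X, eval_C, h0]
      ring
    · rw [hd1, eval_add, eval_mul, eval_sub, eval_X, eval_C, h0, h1,
        Finset.prod_cons, Finset.sum_cons]
      field_simp
      ring
    · rw [hd2, eval_add, eval_mul, eval_mul, eval_sub, eval_X, eval_C, h1, h2,
        Finset.prod_cons, Finset.sum_cons, Finset.sum_cons]
      have : eval 0 (2 : ℝ[X]) = 2 := by simp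
      rw [this]
      field_simp
      ring

lemma aux_hasDerivAt_sq (p : ℝ[X]) (x : ℝ) :
    HasDerivAt (fun y : ℝ => p.eval (y^2)) ((derivative p).eval (x^2) * (2*x)) x := by
  have h := (p.hasDerivAt (x^2)).comp x ((hasDerivAt_pow 2 x))
  refine h.congr_deriv ?_
  norm_num

lemma aux_hd2 (p : ℝ[X]) (x : ℝ) :
    HasDerivAt (fun y : ℝ => 2*y * p.eval (y^2))
      (2 * p.eval (x^2) + 4*x^2 * (derivative p).eval (x^2)) x := by
  have h1 : HasDerivAt (fun y : ℝ => 2*y) 2 x := by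
    simpa using (hasDerivAt_id x).const_mul 2
  have h := h1.mul (aux_hasDerivAt_sq p x)
  refine h.congr_deriv ?_
  ring

lemma aux_hd3 (p q : ℝ[X]) (x : ℝ) :
    HasDerivAt (fun y : ℝ => 2 * p.eval (y^2) + 4*y^2 * q.eval (y^2))
      (4*x * (derivative p).eval (x^2) + 8*x * q.eval (x^2)
        + 8*x^3 * (derivative q).eval (x^2)) x := by
  have h1 := (aux_hasDerivAt_sq p x).const_mul 2
  have h2 : HasDerivAt (fun y : ℝ => 4*y^2) (8*x) x := by
    have := (hasDerivAt_pow 2 x).const_mul 4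
    refine this.congr_deriv ?_
    norm_num <;> ring
  have h3 := h2.mul (aux_hasDerivAt_sq q x)
  have h := h1.add h3
  refine h.congr_deriv ?_
  ring

/-- The φ^{4n} potential `V_n(x) = ∏_{k=1}^n (x² − (k−1/2)²)²`. -/
noncomputable def Vn (n : ℕ) : ℝ → ℝ :=
  fun x => ∏ k ∈ Finset.Icc 1 n, (x ^ 2 - ((k : ℝ) - 1 / 2) ^ 2) ^ 2

/-- `𝒱_n(x) = 3 V_n''(x) ((V_n'(x))² − 2(V_n(x) − V_n(0)) V_n''(x))
      + 2 (V_n(x) − V_n(0)) V_n'(x) V_n'''(x)`. -/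
noncomputable def calV (n : ℕ) (x : ℝ) : ℝ :=
  3 * deriv (deriv (Vn n)) x *
      ((deriv (Vn n) x) ^ 2 - 2 * (Vn n x - Vn n 0) * deriv (deriv (Vn n)) x)
    + 2 * (Vn n x - Vn n 0) * deriv (Vn n) x * deriv (deriv (deriv (Vn n))) x

/-- `Π_{n,0} = ∏_{k=1}^n (k−1/2)²`. -/
noncomputable def PiN0 (n : ℕ) : ℝ :=
  ∏ k ∈ Finset.Icc 1 n, ((k : ℝ) - 1 / 2) ^ 2

/-- `Σ_i(x) = ∑_{P ⊆ {1,…,n}, |P| = i} ∏_{j ∈ P} (x² − (j−1/2)²)`, with `Σ_i = 0` for `i < 0`. -/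
noncomputable def Sig (n : ℕ) (i : ℤ) (x : ℝ) : ℝ :=
  if 0 ≤ i then
    ∑ P ∈ (Finset.Icc 1 n).powersetCard i.toNat, ∏ j ∈ P, (x ^ 2 - ((j : ℝ) - 1 / 2) ^ 2)
  else 0

theorem stmt6 (n : ℕ) (hn : 2 ≤ n) :
    Filter.Tendsto (fun x : ℝ => calV n x / x ^ 4) (nhdsWithin 0 {(0 : ℝ)}ᶜ)
      (nhds (96 * ((PiN0 n) ^ 4 * (Sig n ((n : ℤ) - 1) 0) ^ 2 *
          (∑ k ∈ Finset.Icc 1 n, (((k : ℝ) - 1 / 2) ^ 4)⁻¹)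
        + 4 * (-1) ^ n * (PiN0 n) ^ 3 * (Sig n ((n : ℤ) - 1) 0) ^ 2 * Sig n ((n : ℤ) - 2) 0))) ∧
    0 < 96 * ((PiN0 n) ^ 4 * (Sig n ((n : ℤ) - 1) 0) ^ 2 *
          (∑ k ∈ Finset.Icc 1 n, (((k : ℝ) - 1 / 2) ^ 4)⁻¹)
        + 4 * (-1) ^ n * (PiN0 n) ^ 3 * (Sig n ((n : ℤ) - 1) 0) ^ 2 * Sig n ((n : ℤ) - 2) 0) := by
  -- basic data
  set a : ℕ → ℝ := fun k => ((k : ℝ) - 1 / 2) ^ 2 with ha_def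
  have hapos : ∀ k : ℕ, 0 < a k := by
    intro k
    have hne : ((k : ℝ) - 1 / 2) ≠ 0 := by
      rcases Nat.eq_zero_or_pos k with h | h
      · simp [h]
      · have : (1 : ℝ) ≤ (k : ℝ) := by exact_mod_cast h
        intro hcon; linarith
    positivity
  have hane : ∀ k : ℕ, a k ≠ 0 := fun k => (hapos k).ne'
  set s : Finset ℕ := Finset.Icc 1 n with hs_def
  have hcard : s.card = n := by simp [hs_def]
  set h : ℝ[X] := ∏ k ∈ s, (X - C (a k)) with hh_def
  set Pneg : ℝ := ∏ k ∈ s, (-(a k)) with hPneg_def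
  set S1 : ℝ := ∑ k ∈ s, (a k)⁻¹ with hS1_def
  set S2 : ℝ := ∑ k ∈ s, ((a k)⁻¹) ^ 2 with hS2_def
  obtain ⟨e0, e1, e2⟩ := aux_evals s a hane
  -- V as polynomial in x²
  have hVn : Vn n = fun x : ℝ => (h ^ 2).eval (x ^ 2) := by
    funext x
    simp only [Vn, hh_def, eval_pow, eval_prod, eval_sub, eval_X, eval_C]
    rw [← Finset.prod_pow]
  clear_value h Pneg S1 S2 a s
  -- derivatives
  have hder1 : deriv (Vn n) = fun x : ℝ => (derivative (h ^ 2)).eval (x ^ 2) * (2 * x) := by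
    funext x; rw [hVn]; exact (aux_hasDerivAt_sq (h ^ 2) x).deriv
  have hder1' : deriv (Vn n) = fun x : ℝ => 2 * x * (derivative (h ^ 2)).eval (x ^ 2) := by
    rw [hder1]; funext x; ring
  have hder2 : deriv (deriv (Vn n)) = fun x : ℝ =>
      2 * (derivative (h ^ 2)).eval (x ^ 2)
        + 4 * x ^ 2 * (derivative (derivative (h ^ 2))).eval (x ^ 2) := by
    funext x; rw [hder1']; exact (aux_hd2 (derivative (h ^ 2)) x).deriv
  have hder3 : deriv (deriv (deriv (Vn n))) = fun x : ℝ =>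
      12 * x * (derivative (derivative (h ^ 2))).eval (x ^ 2)
        + 8 * x ^ 3 * (derivative (derivative (derivative (h ^ 2)))).eval (x ^ 2) := by
    funext x; rw [hder2]
    have := (aux_hd3 (derivative (h ^ 2)) (derivative (derivative (h ^ 2))) x).deriv
    rw [this]; ring
  -- the K polynomial
  have hXdvd : X ∣ ((h ^ 2) - C ((h ^ 2).eval 0)) := by
    rw [X_dvd_iff]
    simp [coeff_zero_eq_eval_zero]
  obtain ⟨K, hK⟩ := hXdvd
  have hKval : ∀ t : ℝ, (h ^ 2).eval t - (h ^ 2).eval 0 = t * K.eval t := by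
    intro t
    have := congrArg (eval t) hK
    simpa using this
  have hHK : (h ^ 2 : ℝ[X]) = C ((h ^ 2).eval 0) + X * K := by
    rw [← hK]; ring
  have hD1K : derivative (h ^ 2) = K + X * derivative K := by
    rw [hHK, derivative_add, derivative_C, derivative_mul, derivative_X]; ring
  set p : ℝ := (derivative (h ^ 2)).eval 0 with hp_def
  set q : ℝ := (derivative (derivative (h ^ 2))).eval 0 with hq_def
  clear_value p q
  have hk0 : K.eval 0 = p := by
    rw [hp_def, hD1K]; simp
  have hk1 : q = 2 * (derivative K).eval 0 := by
    rw [hq_def, hD1K, derivative_add, derivative_mul, derivative_X]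
    simp
    ring
  -- the M polynomial
  set D1 : ℝ[X] := derivative (h ^ 2) with hD1_def
  set D2 : ℝ[X] := derivative D1 with hD2_def
  set D3 : ℝ[X] := derivative D2 with hD3_def
  set M : ℝ[X] := 3 * (2 * D1 + 4 * X * D2) * (4 * D1 ^ 2 - 2 * K * (2 * D1 + 4 * X * D2))
    + X * K * D1 * (48 * D2 + 32 * X * D3) with hM_def
  have hcalV : ∀ x : ℝ, calV n x = x ^ 2 * M.eval (x ^ 2) := by
    intro x
    have hdiff : Vn n x - Vn n 0 = x ^ 2 * K.eval (x ^ 2) := by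
      rw [hVn]
      simpa using hKval (x ^ 2)
    simp only [calV]
    rw [hder3, hder2, hder1', hdiff]
    simp only [hM_def]
    simp only [eval_add, eval_mul, eval_sub, eval_pow, eval_X, eval_C, eval_ofNat]
    ring
  have hM0 : M.eval 0 = 0 := by
    simp only [hM_def, eval_add, eval_mul, eval_sub, eval_pow, eval_X, eval_C, eval_ofNat, hk0]
    rw [← hp_def]
    ring
  have hMdvd : X ∣ M := by
    rw [X_dvd_iff, coeff_zero_eq_eval_zero, hM0]
  obtain ⟨N, hN⟩ := hMdvd
  have hNval : ∀ t : ℝ, M.eval t = t * N.eval t := by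
    intro t
    have := congrArg (eval t) hN
    simpa using this
  have hN0 : N.eval 0 = (derivative M).eval 0 := by
    rw [hN, derivative_mul, derivative_X]
    simp
  have hMd : (derivative M).eval 0 = 12 * p ^ 2 * q := by
    simp only [hM_def, derivative_add, derivative_mul, derivative_X, derivative_sub,
      derivative_sq, derivative_ofNat]
    rw [← hD2_def, ← hD3_def]
    simp only [eval_add, eval_mul, eval_sub, eval_pow, eval_X, eval_C, eval_ofNat, eval_zero,
      eval_natCast, zero_mul, mul_zero, add_zero, zero_add]
    rw [← hp_def, ← hq_def, hk0, hk1]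
    ring
  -- values of p and q in terms of Pneg, S1, S2
  have hpval : p = -2 * Pneg ^ 2 * S1 := by
    rw [hp_def, hD1_def, derivative_sq, hh_def]
    simp only [eval_mul, eval_C]
    rw [e0, e1, ← hPneg_def, ← hS1_def]
    ring
  have hqval : q = 2 * Pneg ^ 2 * (2 * S1 ^ 2 - S2) := by
    rw [hq_def, hD2_def, hD1_def, derivative_sq, derivative_mul, derivative_mul, derivative_C,
      hh_def]
    simp only [eval_add, eval_mul, eval_C, zero_mul, eval_zero]
    rw [e0, e1, e2, ← hPneg_def, ← hS1_def, ← hS2_def]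
    ring
  -- Sig values
  have htn1 : ((n : ℤ) - 1).toNat = n - 1 := by omega
  have htn2 : ((n : ℤ) - 2).toNat = n - 2 := by omega
  have hprodneg : ∀ P : Finset ℕ,
      ∏ j ∈ P, ((0:ℝ) ^ 2 - ((j : ℝ) - 1 / 2) ^ 2) = ∏ j ∈ P, (-(a j)) := by
    intro P
    refine Finset.prod_congr rfl fun j _ => ?_
    rw [ha_def]; ring
  have hσ1 : Sig n ((n : ℤ) - 1) 0 = -(Pneg * S1) := by
    have h1 : (0:ℤ) ≤ (n : ℤ) - 1 := by omega
    unfold Sig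
    rw [if_pos h1, htn1, Finset.sum_congr rfl fun P _ => hprodneg P, ← hs_def,
      show n - 1 = s.card - 1 by rw [hcard], aux_compl s 1 (by omega) (fun j => -(a j)),
      Finset.powersetCard_one, Finset.sum_map]
    simp only [Function.Embedding.coeFn_mk, Finset.sdiff_singleton_eq_erase]
    have hterm : ∀ k ∈ s, ∏ j ∈ s.erase k, (-(a j)) = Pneg * (-(a k))⁻¹ := by
      intro k hk
      have hne : (-(a k)) ≠ 0 := by simpa using hane k
      rw [eq_mul_inv_iff_mul_eq₀ hne, hPneg_def]
      exact Finset.prod_erase_mul s _ hk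
    rw [Finset.sum_congr rfl hterm, ← Finset.mul_sum]
    have : ∑ k ∈ s, (-(a k))⁻¹ = -S1 := by
      rw [hS1_def, ← Finset.sum_neg_distrib]
      exact Finset.sum_congr rfl fun k _ => inv_neg
    rw [this]; ring
  have hσ2 : 2 * Sig n ((n : ℤ) - 2) 0 = Pneg * (S1 ^ 2 - S2) := by
    have h1 : (0:ℤ) ≤ (n : ℤ) - 2 := by omega
    unfold Sig
    rw [if_pos h1, htn2, Finset.sum_congr rfl fun P _ => hprodneg P, ← hs_def,
      show n - 2 = s.card - 2 by rw [hcard], aux_compl s 2 (by omega) (fun j => -(a j))]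
    have hterm : ∀ Q ∈ s.powersetCard 2, ∏ j ∈ s \ Q, (-(a j))
        = Pneg * ∏ j ∈ Q, (-(a j))⁻¹ := by
      intro Q hQ
      have hQs := (Finset.mem_powersetCard.1 hQ).1
      have hne : (∏ j ∈ Q, (-(a j))) ≠ 0 :=
        Finset.prod_ne_zero_iff.2 fun j _ => by simpa using hane j
      rw [Finset.prod_inv_distrib, eq_mul_inv_iff_mul_eq₀ hne, hPneg_def]
      exact Finset.prod_sdiff hQs
    rw [Finset.sum_congr rfl hterm, ← Finset.mul_sum]
    have h2 := aux_pc_two s (fun j => (-(a j))⁻¹)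
    have hg1 : ∑ k ∈ s, (-(a k))⁻¹ = -S1 := by
      rw [hS1_def, ← Finset.sum_neg_distrib]
      exact Finset.sum_congr rfl fun k _ => inv_neg
    have hg2 : ∑ k ∈ s, ((-(a k))⁻¹) ^ 2 = S2 := by
      rw [hS2_def]
      exact Finset.sum_congr rfl fun k _ => by rw [inv_neg, neg_sq]
    rw [hg1, hg2] at h2
    linear_combination Pneg * h2
  -- Pneg in terms of PiN0
  have hPneg2 : Pneg = (-1) ^ n * PiN0 n := by
    rw [hPneg_def]
    have : ∀ k ∈ s, -(a k) = (-1) * a k := fun k _ => by ring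
    rw [Finset.prod_congr rfl this, Finset.prod_mul_distrib, Finset.prod_const, hcard,
      show PiN0 n = ∏ k ∈ s, a k by simp [PiN0, ha_def, hs_def]]
  have hS2stmt : ∑ k ∈ s, (((k : ℝ) - 1 / 2) ^ 4)⁻¹ = S2 := by
    rw [hS2_def]
    refine Finset.sum_congr rfl fun k _ => ?_
    rw [inv_pow]
    congr 1
    rw [ha_def]; ring
  -- the final identity
  have hfinal : 96 * ((PiN0 n) ^ 4 * (Sig n ((n : ℤ) - 1) 0) ^ 2 *
          (∑ k ∈ s, (((k : ℝ) - 1 / 2) ^ 4)⁻¹)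
        + 4 * (-1) ^ n * (PiN0 n) ^ 3 * (Sig n ((n : ℤ) - 1) 0) ^ 2 * Sig n ((n : ℤ) - 2) 0)
      = 12 * p ^ 2 * q := by
    have hσ2' : Sig n ((n : ℤ) - 2) 0 = Pneg * (S1 ^ 2 - S2) / 2 := by linarith
    rw [hσ1, hσ2', hS2stmt, hpval, hqval, hPneg2]
    rcases Nat.even_or_odd n with he | he
    · rw [he.neg_one_pow]; ring
    · rw [he.neg_one_pow]; ring
  -- positivity facts
  have hPipos : 0 < PiN0 n := by
    rw [show PiN0 n = ∏ k ∈ s, a k by simp [PiN0, ha_def, hs_def]]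
    exact Finset.prod_pos fun k _ => hapos k
  have hPne : Pneg ≠ 0 := by
    rw [hPneg_def]
    exact Finset.prod_ne_zero_iff.2 fun k _ => by simpa using hane k
  have hP2 : 0 < Pneg ^ 2 := sq_pos_of_ne_zero hPne
  have hS1pos : 0 < S1 := by
    rw [hS1_def]
    refine Finset.sum_pos (fun k _ => inv_pos.2 (hapos k)) ?_
    rw [hs_def]
    exact Finset.nonempty_Icc.2 (by omega)
  have hS2le : S2 ≤ S1 ^ 2 := by
    rw [hS1_def, hS2_def]
    exact Finset.sum_sq_le_sq_sum_of_nonneg fun k _ => le_of_lt (inv_pos.2 (hapos k))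
  have hqpos : 0 < 12 * p ^ 2 * q := by
    rw [hpval, hqval]
    have hrw : 12 * (-2 * Pneg ^ 2 * S1) ^ 2 * (2 * Pneg ^ 2 * (2 * S1 ^ 2 - S2))
        = 96 * ((Pneg ^ 2) ^ 3 * (S1 ^ 2 * (2 * S1 ^ 2 - S2))) := by ring
    rw [hrw]
    have h2S : 0 < 2 * S1 ^ 2 - S2 := by nlinarith
    have := mul_pos (pow_pos hP2 3) (mul_pos (pow_pos hS1pos 2) h2S)
    linarith
  -- limit
  have hNcont : Filter.Tendsto (fun x : ℝ => N.eval (x ^ 2)) (nhds 0) (nhds (N.eval 0)) := by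
    have hc : Continuous fun x : ℝ => N.eval (x ^ 2) := N.continuous.comp (continuous_pow 2)
    have := hc.tendsto 0
    norm_num at this
    exact this
  have hTend : Filter.Tendsto (fun x : ℝ => calV n x / x ^ 4) (nhdsWithin 0 {(0:ℝ)}ᶜ)
      (nhds (N.eval 0)) := by
    refine Filter.Tendsto.congr' ?_ (hNcont.mono_left nhdsWithin_le_nhds)
    filter_upwards [self_mem_nhdsWithin] with x hx
    have hx0 : (x : ℝ) ≠ 0 := hx
    rw [hcalV x, hNval (x ^ 2)]
    field_simp
  have hval : N.eval 0 = 12 * p ^ 2 * q := by rw [hN0, hMd]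
  constructor
  · rw [hfinal, ← hval]
    exact hTend
  · rw [hfinal]
    exact hqpos
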